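/- Let θ ~ Exp(α) be independent of a standard Brownian motion w, κ = a - σ²/2 with a, σ > 0, β = 2a/σ² - 1 > 0, and M = exp(-σ w_θ - κ θ). Then E[M^β (log M)₊] ≤ (β σ² + κ) E[θ] + σ √(2/π) E[√θ] < ∞. -/

import Mathlib

open MeasureTheory ProbabilityTheory Real


lemma aux_integrable_mul : Integrable (fun x : ℝ => x * rexp (-x^2/2)) := by
  have h := integrable_mul_exp_neg_mul_sq (b := (1:ℝ)/2) (by norm_num)
  have : (fun x : ℝ => x * rexp (-(1/2) * x^2)) = fun x : ℝ => x * rexp (-x^2/2) := by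
    funext x; rw [show -(1/2) * x^2 = -x^2/2 by ring]
  rwa [this] at h

lemma aux_int_Ioi : ∫ x in Set.Ioi (0:ℝ), x * rexp (-x^2/2) = 1 := by
  have h : ∀ x ∈ Set.Ioi (0:ℝ), HasDerivAt (fun y : ℝ => -rexp (-y^2/2)) (x * rexp (-x^2/2)) x := by
    intro x hx
    have h1 : HasDerivAt (fun y : ℝ => -y^2/2) (-x) x := by
      have := ((hasDerivAt_pow 2 x).neg.div_const 2)
      exact this.congr_deriv (by push_cast; ring)
    have := (h1.exp).neg
    exact this.congr_deriv (by ring)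
  have hint : IntegrableOn (fun x : ℝ => x * rexp (-x^2/2)) (Set.Ioi 0) :=
    aux_integrable_mul.integrableOn
  have htend : Filter.Tendsto (fun y : ℝ => -rexp (-y^2/2)) Filter.atTop (nhds 0) := by
    rw [show (0:ℝ) = -0 by ring]
    refine Filter.Tendsto.neg ?_
    have : Filter.Tendsto (fun y : ℝ => y^2/2) Filter.atTop Filter.atTop :=
      (Filter.tendsto_pow_atTop two_ne_zero).atTop_div_const (by norm_num)
    have h2 : Filter.Tendsto (fun y : ℝ => -(y^2/2)) Filter.atTop Filter.atBot :=
      Filter.tendsto_neg_atBot_iff.mpr this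
    simpa [Function.comp_def, neg_div] using Real.tendsto_exp_atBot.comp h2
  have hcont : ContinuousWithinAt (fun y : ℝ => -rexp (-y^2/2)) (Set.Ici 0) 0 :=
    (Continuous.continuousWithinAt (by continuity))
  have := integral_Ioi_of_hasDerivAt_of_tendsto hcont h hint htend
  simpa using this

lemma aux_two_div_sqrt : 2 * (√(2*π))⁻¹ = √(2/π) := by
  have hπ : (0:ℝ) < π := Real.pi_pos
  have h2 : √(2*π) = √2 * √π := Real.sqrt_mul (by norm_num) π
  have h3 : √(2/π) = √2 / √π := Real.sqrt_div (by norm_num) π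
  have h4 : √2 * √2 = 2 := Real.mul_self_sqrt (by norm_num)
  have h5 : (0:ℝ) < √π := Real.sqrt_pos.mpr hπ
  have h6 : (0:ℝ) < √2 := Real.sqrt_pos.mpr (by norm_num)
  rw [h2, h3]
  field_simp
  nlinarith [h4]

lemma aux_abs_moment : ∫ x : ℝ, |x| * ((√(2*π))⁻¹ * rexp (-x^2/2)) = √(2/π) := by
  have key : ∀ x : ℝ, |x| * ((√(2*π))⁻¹ * rexp (-x^2/2))
      = (fun u : ℝ => u * ((√(2*π))⁻¹ * rexp (-u^2/2))) |x| := by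
    intro x; simp only [sq_abs]
  calc ∫ x : ℝ, |x| * ((√(2*π))⁻¹ * rexp (-x^2/2))
      = ∫ x : ℝ, (fun u : ℝ => u * ((√(2*π))⁻¹ * rexp (-u^2/2))) |x| := by
        congr 1; funext x; exact key x
    _ = 2 * ∫ x in Set.Ioi (0:ℝ), (fun u : ℝ => u * ((√(2*π))⁻¹ * rexp (-u^2/2))) x :=
        integral_comp_abs (f := fun u : ℝ => u * ((√(2*π))⁻¹ * rexp (-u^2/2)))
    _ = 2 * ((√(2*π))⁻¹ * ∫ x in Set.Ioi (0:ℝ), x * rexp (-x^2/2)) := by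
        simp_rw [show ∀ x:ℝ, x * ((√(2*π))⁻¹ * rexp (-x^2/2))
          = (√(2*π))⁻¹ * (x * rexp (-x^2/2)) from fun x => by ring,
          MeasureTheory.integral_const_mul]
    _ = √(2/π) := by rw [aux_int_Ioi, mul_one, aux_two_div_sqrt]

lemma aux_phi_eq : gaussianPDFReal 0 1 = fun x => (√(2*π))⁻¹ * rexp (-x^2/2) := by
  funext x
  simp [gaussianPDFReal, neg_div]

lemma aux_phi_nonneg (x : ℝ) : 0 ≤ (√(2*π))⁻¹ * rexp (-x^2/2) := by
  positivity

lemma aux_J2 : ∫⁻ x : ℝ, ENNReal.ofReal ((√(2*π))⁻¹ * rexp (-x^2/2)) = 1 := by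
  have := lintegral_gaussianPDF_eq_one 0 (one_ne_zero)
  simpa [gaussianPDF, aux_phi_eq] using this

lemma aux_J1 : ∫⁻ x : ℝ, ENNReal.ofReal (|x| * ((√(2*π))⁻¹ * rexp (-x^2/2)))
    = ENNReal.ofReal (√(2/π)) := by
  have hint : Integrable (fun x : ℝ => |x| * ((√(2*π))⁻¹ * rexp (-x^2/2))) := by
    have h1 : Integrable (fun x : ℝ => |x| * rexp (-x^2/2)) := by
      have := aux_integrable_mul.abs
      simpa [abs_mul, abs_of_nonneg (Real.exp_nonneg _)] using this
    have := h1.const_mul ((√(2*π))⁻¹)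
    exact this.congr (Filter.Eventually.of_forall fun x => by ring)
  rw [← ofReal_integral_eq_lintegral_ofReal hint
    (Filter.Eventually.of_forall fun x => by positivity), aux_abs_moment]

lemma gauss_bound {σ κ β : ℝ} (hσ : 0 < σ) (hβ : 0 < β) (hκ : β * σ^2 = 2*κ) {t : ℝ}
    (ht : 0 ≤ t) :
    ∫⁻ x, ENNReal.ofReal (rexp (β * (-σ * √t * x - κ * t)) * (σ * √t * |x| + κ * t))
        ∂(gaussianReal 0 1)
      ≤ ENNReal.ofReal (σ * √(2/π) * √t + (β * σ^2 + κ) * t) := by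
  have hκ0 : 0 < κ := by have := mul_pos hβ (pow_pos hσ 2); linarith
  set c : ℝ := β * σ * √t with hc
  have hc0 : 0 ≤ c := by positivity
  have hst : √t * √t = t := Real.mul_self_sqrt ht
  have hmeas : Measurable fun x : ℝ =>
      ENNReal.ofReal (rexp (β * (-σ * √t * x - κ * t)) * (σ * √t * |x| + κ * t)) :=
    ENNReal.measurable_ofReal.comp
      ((((measurable_id.const_mul (-σ * √t)).sub_const (κ * t)).const_mul β).exp.mul
        ((measurable_abs.const_mul (σ * √t)).add_const (κ * t)))
  rw [gaussianReal_of_var_ne_zero 0 one_ne_zero,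
    lintegral_withDensity_eq_lintegral_mul _ (measurable_gaussianPDF 0 1) hmeas]
  have hpt : ∀ x : ℝ, (gaussianPDF 0 1 * fun x =>
      ENNReal.ofReal (rexp (β * (-σ * √t * x - κ * t)) * (σ * √t * |x| + κ * t))) x
      = (fun y => ENNReal.ofReal (((√(2*π))⁻¹ * rexp (-y^2/2)) * (σ * √t * |y - c| + κ * t)))
        (x + c) := by
    intro x
    simp only [Pi.mul_apply, gaussianPDF, aux_phi_eq, add_sub_cancel_right]
    rw [← ENNReal.ofReal_mul (aux_phi_nonneg x)]
    congr 1
    have hexp : (√(2*π))⁻¹ * rexp (-x^2/2) * rexp (β * (-σ * √t * x - κ * t))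
        = (√(2*π))⁻¹ * rexp (-(x+c)^2/2) := by
      rw [mul_assoc, ← Real.exp_add]
      congr 2
      have h2 : √t ^ 2 = t := by rw [sq]; exact hst
      rw [hc]
      linear_combination (β^2*σ^2/2) * h2 + (β*t/2) * hκ
    rw [← hexp]; ring
  simp_rw [hpt]
  rw [lintegral_add_right_eq_self
    (fun y => ENNReal.ofReal (((√(2*π))⁻¹ * rexp (-y^2/2)) * (σ * √t * |y - c| + κ * t))) c]
  have hbd : ∀ y : ℝ,
      ENNReal.ofReal (((√(2*π))⁻¹ * rexp (-y^2/2)) * (σ * √t * |y - c| + κ * t))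
      ≤ ENNReal.ofReal (σ * √t) * ENNReal.ofReal (|y| * ((√(2*π))⁻¹ * rexp (-y^2/2)))
        + ENNReal.ofReal (σ * √t * c + κ * t) * ENNReal.ofReal ((√(2*π))⁻¹ * rexp (-y^2/2)) := by
    intro y
    rw [← ENNReal.ofReal_mul (by positivity), ← ENNReal.ofReal_mul (by positivity),
      ← ENNReal.ofReal_add (by positivity) (by positivity)]
    apply ENNReal.ofReal_le_ofReal
    have habs : |y - c| ≤ |y| + c := by
      calc |y - c| ≤ |y| + |c| := abs_sub y c
      _ = |y| + c := by rw [abs_of_nonneg hc0]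
    have h1 : 0 ≤ (√(2*π))⁻¹ * rexp (-y^2/2) := aux_phi_nonneg y
    nlinarith [mul_le_mul_of_nonneg_left habs (by positivity : (0:ℝ) ≤ σ * √t),
      mul_le_mul_of_nonneg_left
        (mul_le_mul_of_nonneg_left habs (by positivity : (0:ℝ) ≤ σ * √t)) h1,
      abs_nonneg y]
  calc ∫⁻ y, ENNReal.ofReal (((√(2*π))⁻¹ * rexp (-y^2/2)) * (σ * √t * |y - c| + κ * t))
      ≤ ∫⁻ y, (ENNReal.ofReal (σ * √t) * ENNReal.ofReal (|y| * ((√(2*π))⁻¹ * rexp (-y^2/2)))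
        + ENNReal.ofReal (σ * √t * c + κ * t) * ENNReal.ofReal ((√(2*π))⁻¹ * rexp (-y^2/2))) :=
        lintegral_mono hbd
    _ = ENNReal.ofReal (σ * √t) * ENNReal.ofReal (√(2/π))
        + ENNReal.ofReal (σ * √t * c + κ * t) * 1 := by
        have hm1 : Measurable fun y : ℝ =>
            ENNReal.ofReal (|y| * ((√(2*π))⁻¹ * rexp (-y^2/2))) :=
          ENNReal.measurable_ofReal.comp (measurable_abs.mul
            (((measurable_id.pow_const 2).neg.div_const 2).exp.const_mul _))
        rw [lintegral_add_left (hm1.const_mul _),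
          lintegral_const_mul' _ _ ENNReal.ofReal_ne_top,
          lintegral_const_mul' _ _ ENNReal.ofReal_ne_top, aux_J1, aux_J2]
    _ ≤ ENNReal.ofReal (σ * √(2/π) * √t + (β * σ^2 + κ) * t) := by
        rw [mul_one, ← ENNReal.ofReal_mul (by positivity),
          ← ENNReal.ofReal_add (by positivity) (by positivity)]
        apply ENNReal.ofReal_le_ofReal
        have : σ * √t * c = β * σ^2 * t := by rw [hc]; nlinarith [hst]
        nlinarith [this]

lemma aux_expMeasure_ae_nonneg (α : ℝ) : ∀ᵐ t ∂(expMeasure α), 0 ≤ t := by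
  rw [ae_iff]
  have : {t : ℝ | ¬ 0 ≤ t} = Set.Iio 0 := by ext t; simp
  rw [this, expMeasure, gammaMeasure, withDensity_apply _ measurableSet_Iio]
  exact lintegral_gammaPDF_of_nonpos le_rfl

lemma aux_exp_integrableOn {α : ℝ} (hα : 0 < α) :
    IntegrableOn (fun x : ℝ => x * (α * rexp (-(α * x)))) (Set.Ici 0) := by
  have hg : IntegrableOn (fun x : ℝ => 2 * rexp (-(α/2) * x)) (Set.Ici 0) := by
    rw [integrableOn_Ici_iff_integrableOn_Ioi]
    exact (exp_neg_integrableOn_Ioi 0 (by linarith)).const_mul 2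
  refine Integrable.mono' hg ?_ ?_
  · exact (by fun_prop : Measurable fun x : ℝ => x * (α * rexp (-(α * x)))).aestronglyMeasurable
  · filter_upwards [ae_restrict_mem measurableSet_Ici] with x (hx : 0 ≤ x)
    have h1 : α * x / 2 ≤ rexp (α * x / 2) := by
      have := Real.add_one_le_exp (α * x / 2); linarith
    have h2 : 0 ≤ α * x := by positivity
    rw [Real.norm_eq_abs, abs_of_nonneg (by positivity)]
    have h6 : (α*x/2) * rexp (-(α*x)) ≤ rexp (α*x/2) * rexp (-(α*x)) :=
      mul_le_mul_of_nonneg_right h1 (Real.exp_nonneg _)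
    have h7 : rexp (α*x/2) * rexp (-(α*x)) = rexp (-(α/2)*x) := by
      rw [← Real.exp_add]; congr 1; ring
    calc x * (α * rexp (-(α * x))) = 2 * ((α*x/2) * rexp (-(α*x))) := by ring
      _ ≤ 2 * (rexp (α*x/2) * rexp (-(α*x))) := by linarith
      _ = 2 * rexp (-(α/2)*x) := by rw [h7]

lemma aux_integrable_id_exp {α : ℝ} (hα : 0 < α) :
    Integrable (fun t : ℝ => t) (expMeasure α) := by
  have hpdfmeas : Measurable (gammaPDF 1 α) := (measurable_gammaPDFReal 1 α).ennreal_ofReal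
  rw [expMeasure, gammaMeasure, integrable_withDensity_iff hpdfmeas
    (Filter.Eventually.of_forall fun x => ENNReal.ofReal_lt_top)]
  have heq : (fun x : ℝ => x * (gammaPDF 1 α x).toReal)
      = Set.indicator (Set.Ici 0) (fun x : ℝ => x * (α * rexp (-(α * x)))) := by
    funext x
    by_cases hx : 0 ≤ x
    · rw [Set.indicator_of_mem (Set.mem_Ici.mpr hx), gammaPDF_of_nonneg hx]
      rw [ENNReal.toReal_ofReal (by positivity)]
      simp [Real.Gamma_one]
    · rw [Set.indicator_of_notMem (by simpa using hx), gammaPDF_of_neg (not_le.mp hx)]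
      simp
  rw [heq]
  exact (aux_exp_integrableOn hα).integrable_indicator measurableSet_Ici

lemma aux_integrable_sqrt_exp {α : ℝ} (hα : 0 < α) :
    Integrable (fun t : ℝ => √t) (expMeasure α) := by
  haveI : IsProbabilityMeasure (expMeasure α) := isProbabilityMeasure_expMeasure hα
  refine Integrable.mono' ((integrable_const 1).add (aux_integrable_id_exp hα)) ?_ ?_
  · exact Real.continuous_sqrt.measurable.aestronglyMeasurable
  · filter_upwards [aux_expMeasure_ae_nonneg α] with t ht
    rw [Real.norm_eq_abs, abs_of_nonneg (Real.sqrt_nonneg t), Pi.add_apply]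
    nlinarith [sq_nonneg (√t - 1), Real.sq_sqrt ht, Real.sqrt_nonneg t]

/-- Let `θ ~ Exp(α)` be independent of a standard Brownian motion `w`, and
`M = exp(-σ w_θ - κ θ)`.  Conditionally on `θ`, `w_θ` is `N(0, θ)`, so we represent
`w_θ = √θ · N` with `N` standard normal independent of `θ`.  With `κ = a - σ²/2`,
`β = 2(κ + σ²/2)/σ² - 1 > 0`, one has
`E[M^β (log M)₊] ≤ (β σ² + κ) E[θ] + σ √(2/π) E[√θ] < ∞`. -/
theorem stmt_5 {Ω : Type*} [MeasurableSpace Ω] (μ : Measure Ω) [IsProbabilityMeasure μ]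
    (θ N : Ω → ℝ) (hθmeas : Measurable θ) (hNmeas : Measurable N)
    {α : ℝ} (hα : 0 < α) (hθlaw : Measure.map θ μ = expMeasure α)
    (hNlaw : Measure.map N μ = gaussianReal 0 1)
    (hindep : IndepFun θ N μ)
    {σ κ β : ℝ} (hσ : 0 < σ)
    (hβdef : β = 2 * (κ + σ ^ 2 / 2) / σ ^ 2 - 1) (hβ : 0 < β)
    (M : Ω → ℝ)
    (hM : ∀ ω, M ω = Real.exp (-σ * Real.sqrt (θ ω) * N ω - κ * θ ω)) :
    ∫⁻ ω, ENNReal.ofReal (M ω ^ β * max (Real.log (M ω)) 0) ∂μ ≤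
      ENNReal.ofReal ((β * σ ^ 2 + κ) * ∫ ω, θ ω ∂μ
        + σ * Real.sqrt (2 / Real.pi) * ∫ ω, Real.sqrt (θ ω) ∂μ) := by
  haveI : IsProbabilityMeasure (expMeasure α) := isProbabilityMeasure_expMeasure hα
  have hκσ : β * σ ^ 2 = 2 * κ := by
    have hσ2 : σ ^ 2 ≠ 0 := ne_of_gt (pow_pos hσ 2)
    rw [hβdef]; field_simp; ring
  have hκ0 : 0 < κ := by nlinarith [mul_pos hβ (pow_pos hσ 2)]
  have hc20 : 0 ≤ β * σ ^ 2 + κ := by positivity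
  have hθ0 : ∀ᵐ ω ∂μ, 0 ≤ θ ω := by
    have h := aux_expMeasure_ae_nonneg α
    rw [← hθlaw] at h
    exact (ae_map_iff hθmeas.aemeasurable (measurableSet_Ici (a := (0:ℝ)))).mp h
  have hgmeas : Measurable fun p : ℝ × ℝ =>
      ENNReal.ofReal (rexp (β * (-σ * √p.1 * p.2 - κ * p.1)) * (σ * √p.1 * |p.2| + κ * p.1)) := by
    fun_prop
  have hmapprod : Measure.map (fun ω => (θ ω, N ω)) μ
      = (expMeasure α).prod (gaussianReal 0 1) := by
    rw [← hθlaw, ← hNlaw]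
    exact (indepFun_iff_map_prod_eq_prod_map_map hθmeas.aemeasurable
      hNmeas.aemeasurable).mp hindep
  have hθint : Integrable θ μ := by
    have h := aux_integrable_id_exp hα
    rw [← hθlaw] at h
    exact (integrable_map_measure aestronglyMeasurable_id hθmeas.aemeasurable).mp h
  have hsint : Integrable (fun ω => √(θ ω)) μ := by
    have h := aux_integrable_sqrt_exp hα
    rw [← hθlaw] at h
    exact (integrable_map_measure
      Real.continuous_sqrt.measurable.aestronglyMeasurable hθmeas.aemeasurable).mp h
  calc ∫⁻ ω, ENNReal.ofReal (M ω ^ β * max (Real.log (M ω)) 0) ∂μ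
      ≤ ∫⁻ ω, ENNReal.ofReal
          (rexp (β * (-σ * √(θ ω) * N ω - κ * θ ω)) * (σ * √(θ ω) * |N ω| + κ * θ ω)) ∂μ := by
        refine lintegral_mono_ae ?_
        filter_upwards [hθ0] with ω ht
        apply ENNReal.ofReal_le_ofReal
        rw [hM ω, Real.log_exp, ← Real.exp_mul,
          mul_comm (-σ * √(θ ω) * N ω - κ * θ ω) β]
        refine mul_le_mul_of_nonneg_left ?_ (Real.exp_nonneg _)
        refine max_le ?_ (by positivity)
        have h1 : -σ * √(θ ω) * N ω ≤ σ * √(θ ω) * |N ω| := by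
          calc -σ * √(θ ω) * N ω = -(σ * √(θ ω) * N ω) := by ring
            _ ≤ |σ * √(θ ω) * N ω| := neg_le_abs _
            _ = σ * √(θ ω) * |N ω| := by
                rw [abs_mul, abs_of_nonneg (by positivity : (0:ℝ) ≤ σ * √(θ ω))]
        have h2 : 0 ≤ κ * θ ω := by positivity
        linarith
    _ = ∫⁻ p : ℝ × ℝ, ENNReal.ofReal
          (rexp (β * (-σ * √p.1 * p.2 - κ * p.1)) * (σ * √p.1 * |p.2| + κ * p.1))
          ∂((expMeasure α).prod (gaussianReal 0 1)) := by
        rw [← hmapprod, lintegral_map hgmeas (hθmeas.prodMk hNmeas)]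
    _ = ∫⁻ t, ∫⁻ x, ENNReal.ofReal
          (rexp (β * (-σ * √t * x - κ * t)) * (σ * √t * |x| + κ * t)) ∂(gaussianReal 0 1)
          ∂(expMeasure α) := lintegral_prod _ hgmeas.aemeasurable
    _ ≤ ∫⁻ t, ENNReal.ofReal (σ * √(2/π) * √t + (β * σ^2 + κ) * t) ∂(expMeasure α) := by
        refine lintegral_mono_ae ?_
        filter_upwards [aux_expMeasure_ae_nonneg α] with t ht
        exact gauss_bound hσ hβ hκσ ht
    _ = ∫⁻ ω, ENNReal.ofReal (σ * √(2/π) * √(θ ω) + (β * σ^2 + κ) * θ ω) ∂μ := by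
        rw [← hθlaw, lintegral_map (by fun_prop) hθmeas]
    _ = ENNReal.ofReal (∫ ω, (σ * √(2/π) * √(θ ω) + (β * σ^2 + κ) * θ ω) ∂μ) :=
        (ofReal_integral_eq_lintegral_ofReal
          ((hsint.const_mul _).add (hθint.const_mul _))
          (by filter_upwards [hθ0] with ω h
              have h1 : (0:ℝ) ≤ σ * √(2/π) := by positivity
              simp only [Pi.add_apply, Pi.zero_apply]
              nlinarith [mul_nonneg hc20 h, mul_nonneg h1 (Real.sqrt_nonneg (θ ω))])).symm
    _ = ENNReal.ofReal ((β * σ ^ 2 + κ) * ∫ ω, θ ω ∂μ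
          + σ * √(2/π) * ∫ ω, √(θ ω) ∂μ) := by
        rw [integral_add (hsint.const_mul _) (hθint.const_mul _),
          MeasureTheory.integral_const_mul, MeasureTheory.integral_const_mul, add_comm]
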